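/- Let f : ℕ → [0,∞) with f(0) > f(k) for all k ≥ 1 and a > 0, and let (y_k) solve the recurrence (R). If f(0)e^{−a} < liminf_{n→∞} f(n), then ∑_{k≥0} y_k diverges, and no quasispecies associated to f exists. -/

import Mathlib

open Finset Filter

/-- `x` is a quasispecies associated to the fitness function `f`
    (with parameter `a`). -/
def IsQuasispecies (f : ℕ → ℝ) (a : ℝ) (x : ℕ → ℝ) : Prop :=
  (∀ k, 0 ≤ x k) ∧ 0 < x 0 ∧ (∑' k, x k) = 1 ∧
  Summable (fun j => x j * f j) ∧
  ∀ k, ∑ j ∈ Finset.range (k + 1),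
      x j * f j * Real.exp (-a) * a ^ (k - j) / (Nat.factorial (k - j))
    = x k * ∑' j, x j * f j

theorem error_threshold_supercritical
    (f : ℕ → ℝ) (hf0 : ∀ k, 0 ≤ f k) (hf : ∀ k, 1 ≤ k → f k < f 0)
    (a : ℝ) (ha : 0 < a)
    (y : ℕ → ℝ) (hy0 : y 0 = 1)
    (hy : ∀ k, 1 ≤ k →
      y k = (1 / (f 0 - f k)) *
        ∑ j ∈ Finset.range k, y j * f j * a ^ (k - j) / (Nat.factorial (k - j)))
    (hth : f 0 * Real.exp (-a) < liminf f atTop) :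
    ¬ Summable y ∧ ¬ ∃ x, IsQuasispecies f a x := by
  have hf0pos : 0 < f 0 := lt_of_le_of_lt (hf0 1) (hf 1 le_rfl)
  have hfk : ∀ k, 1 ≤ k → 0 < f 0 - f k := fun k hk => sub_pos.2 (hf k hk)
  -- positivity of y
  have hypos : ∀ k, 0 < y k := by
    intro k
    induction k using Nat.strong_induction_on with
    | _ k ih =>
      rcases Nat.eq_zero_or_pos k with rfl | hk
      · rw [hy0]; exact one_pos
      · rw [hy k hk]
        have hsum : 0 < ∑ j ∈ Finset.range k,
            y j * f j * a ^ (k - j) / (Nat.factorial (k - j)) := by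
          apply Finset.sum_pos'
          · intro j hj
            have hyj := (ih j (Finset.mem_range.1 hj)).le
            have hfj := hf0 j
            positivity
          · refine ⟨0, Finset.mem_range.2 hk, ?_⟩
            rw [hy0]
            have : (0:ℝ) < (Nat.factorial (k - 0) : ℝ) :=
              Nat.cast_pos.2 (Nat.factorial_pos _)
            positivity
        exact mul_pos (one_div_pos.2 (hfk k hk)) hsum
  -- the recurrence in product form
  have hid : ∀ k, 1 ≤ k → (f 0 - f k) * y k =
      ∑ j ∈ Finset.range k, y j * f j * a ^ (k - j) / (Nat.factorial (k - j)) := by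
    intro k hk
    rw [hy k hk]
    have h := (hfk k hk).ne'
    field_simp
  -- choose c strictly between f 0 * exp (-a) and liminf f
  obtain ⟨c, hc1, hc2⟩ := exists_between hth
  have hcpos : 0 < c := lt_trans (by positivity) hc1
  have hev : ∀ᶠ k in atTop, c < f k :=
    eventually_lt_of_lt_liminf hc2 (Filter.isBoundedUnder_of ⟨0, hf0⟩)
  obtain ⟨N, hN⟩ := eventually_atTop.1 hev
  -- c * exp a > f 0
  have hce : f 0 < c * Real.exp a := by
    rw [Real.exp_neg, ← div_eq_mul_inv] at hc1
    exact (div_lt_iff₀ (Real.exp_pos a)).1 hc1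
  -- choose K with c * ∑_{m<K} a^(m+1)/(m+1)! ≥ f 0 - c
  have hexp : Tendsto (fun n => c * ∑ i ∈ Finset.range n, a ^ i / (Nat.factorial i : ℝ))
      atTop (nhds (c * Real.exp a)) := by
    have h := (NormedSpace.expSeries_div_hasSum_exp (𝔸 := ℝ) a).tendsto_sum_nat
    rw [← Real.exp_eq_exp_ℝ] at h
    exact h.const_mul c
  obtain ⟨K0, hK0⟩ := (eventually_atTop.1 (hexp.eventually (eventually_gt_nhds hce)))
  set K : ℕ := K0 + 1 with hKdef
  have hσ : f 0 - c ≤ c * ∑ m ∈ Finset.range K, a ^ (m + 1) / (Nat.factorial (m + 1) : ℝ) := by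
    have h1 : f 0 < c * ∑ i ∈ Finset.range (K + 1), a ^ i / (Nat.factorial i : ℝ) :=
      hK0 (K + 1) (by omega)
    have h2 : ∑ i ∈ Finset.range (K + 1), a ^ i / (Nat.factorial i : ℝ)
        = (∑ m ∈ Finset.range K, a ^ (m + 1) / (Nat.factorial (m + 1) : ℝ)) + 1 := by
      rw [Finset.sum_range_succ' (fun i => a ^ i / (Nat.factorial i : ℝ)) K]
      norm_num
    rw [h2] at h1
    nlinarith
  -- the uniform lower bound M
  have hne : (Finset.Icc N (N + K)).Nonempty := ⟨N, by simp⟩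
  set M : ℝ := (Finset.Icc N (N + K)).inf' hne y with hMdef
  have hMpos : 0 < M := by
    rw [hMdef, Finset.lt_inf'_iff]
    exact fun b _ => hypos b
  have hMle : ∀ k, N ≤ k → M ≤ y k := by
    intro k
    induction k using Nat.strong_induction_on with
    | _ k ih =>
      intro hNk
      by_cases hk : k ≤ N + K
      · exact Finset.inf'_le y (Finset.mem_Icc.2 ⟨hNk, hk⟩)
      · push_neg at hk
        have hk1 : 1 ≤ k := by omega
        have hidk := hid k hk1
        -- reflect the sum
        have hrefl : ∑ j ∈ Finset.range k,
              y j * f j * a ^ (k - j) / (Nat.factorial (k - j))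
            = ∑ m ∈ Finset.range k,
              y (k - 1 - m) * f (k - 1 - m) * a ^ (k - (k - 1 - m)) /
                (Nat.factorial (k - (k - 1 - m))) :=
          (Finset.sum_range_reflect
            (fun j => y j * f j * a ^ (k - j) / (Nat.factorial (k - j))) k).symm
        have hsub : ∑ m ∈ Finset.range K,
              y (k - 1 - m) * f (k - 1 - m) * a ^ (k - (k - 1 - m)) /
                (Nat.factorial (k - (k - 1 - m)))
            ≤ ∑ m ∈ Finset.range k,
              y (k - 1 - m) * f (k - 1 - m) * a ^ (k - (k - 1 - m)) /
                (Nat.factorial (k - (k - 1 - m))) := by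
          apply Finset.sum_le_sum_of_subset_of_nonneg
          · exact Finset.range_subset_range.2 (by omega)
          · intro j _ _
            have := (hypos (k - 1 - j)).le
            have := hf0 (k - 1 - j)
            positivity
        have hterm : ∀ m ∈ Finset.range K,
            M * (c * (a ^ (m + 1) / (Nat.factorial (m + 1) : ℝ)))
              ≤ y (k - 1 - m) * f (k - 1 - m) * a ^ (k - (k - 1 - m)) /
                (Nat.factorial (k - (k - 1 - m))) := by
          intro m hm
          have hmK := Finset.mem_range.1 hm
          have h1 : k - (k - 1 - m) = m + 1 := by omega
          have h2 : N ≤ k - 1 - m := by omega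
          have h3 : k - 1 - m < k := by omega
          rw [h1]
          have hy' : M ≤ y (k - 1 - m) := ih _ h3 h2
          have hfc : c ≤ f (k - 1 - m) := (hN _ h2).le
          have hfac : (0:ℝ) < (Nat.factorial (m + 1) : ℝ) :=
            Nat.cast_pos.2 (Nat.factorial_pos _)
          have hyy := hypos (k - 1 - m)
          have key : M * c ≤ y (k - 1 - m) * f (k - 1 - m) :=
            mul_le_mul hy' hfc hcpos.le hyy.le
          have hpw : (0:ℝ) ≤ a ^ (m + 1) := by positivity
          calc M * (c * (a ^ (m + 1) / (Nat.factorial (m + 1) : ℝ)))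
              = (M * c) * a ^ (m + 1) / (Nat.factorial (m + 1) : ℝ) := by ring
            _ ≤ y (k - 1 - m) * f (k - 1 - m) * a ^ (m + 1) / (Nat.factorial (m + 1) : ℝ) := by
                gcongr
        have hsum2 : M * (c * ∑ m ∈ Finset.range K, a ^ (m + 1) / (Nat.factorial (m + 1) : ℝ))
            ≤ ∑ m ∈ Finset.range K,
              y (k - 1 - m) * f (k - 1 - m) * a ^ (k - (k - 1 - m)) /
                (Nat.factorial (k - (k - 1 - m))) := by
          rw [Finset.mul_sum, Finset.mul_sum]
          exact Finset.sum_le_sum hterm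
        have hMc : M * (f 0 - c)
            ≤ M * (c * ∑ m ∈ Finset.range K, a ^ (m + 1) / (Nat.factorial (m + 1) : ℝ)) :=
          mul_le_mul_of_nonneg_left hσ hMpos.le
        have hfck : c ≤ f k := (hN k hNk).le
        have hfinal : M * (f 0 - f k) ≤ (f 0 - f k) * y k := by
          calc M * (f 0 - f k) ≤ M * (f 0 - c) :=
                mul_le_mul_of_nonneg_left (by linarith) hMpos.le
            _ ≤ _ := hMc
            _ ≤ _ := hsum2
            _ ≤ _ := hsub
            _ = (f 0 - f k) * y k := by rw [← hrefl, ← hidk]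
        have hpos := hfk k hk1
        nlinarith
  -- first conclusion
  have hns : ¬ Summable y := by
    intro hs
    have h0 := hs.tendsto_atTop_zero
    have h1 : ∀ᶠ k in atTop, y k < M := h0.eventually (eventually_lt_nhds hMpos)
    obtain ⟨k, hk1, hk2⟩ := ((eventually_atTop.2 ⟨N, hMle⟩).and h1).exists
    linarith
  refine ⟨hns, ?_⟩
  rintro ⟨x, hxnn, hx0, hxsum1, hxsumf, hxeq⟩
  -- identify the mean fitness
  have hT : (∑' j, x j * f j) = f 0 * Real.exp (-a) := by
    have h := hxeq 0
    rw [Finset.sum_range_one] at h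
    simp only [Nat.sub_self, pow_zero, Nat.factorial_zero, Nat.cast_one, mul_one, div_one] at h
    have h' : x 0 * (f 0 * Real.exp (-a)) = x 0 * ∑' j, x j * f j := by
      rw [← h]; ring
    exact (mul_left_cancel₀ hx0.ne' h').symm
  -- cleaned stationarity equation
  have hclean : ∀ k, (f 0) * x k =
      ∑ j ∈ Finset.range (k + 1), x j * f j * a ^ (k - j) / (Nat.factorial (k - j)) := by
    intro k
    have h := hxeq k
    rw [hT] at h
    have hE := Real.exp_pos (-a)
    have h2 : ∑ j ∈ Finset.range (k + 1),
        x j * f j * Real.exp (-a) * a ^ (k - j) / (Nat.factorial (k - j))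
        = Real.exp (-a) * ∑ j ∈ Finset.range (k + 1),
            x j * f j * a ^ (k - j) / (Nat.factorial (k - j)) := by
      rw [Finset.mul_sum]
      exact Finset.sum_congr rfl fun j _ => by ring
    rw [h2] at h
    have h3 : x k * (f 0 * Real.exp (-a)) = Real.exp (-a) * (f 0 * x k) := by ring
    rw [h3] at h
    exact (mul_left_cancel₀ hE.ne' h).symm
  -- x is proportional to y
  have hxy : ∀ k, x k = x 0 * y k := by
    intro k
    induction k using Nat.strong_induction_on with
    | _ k ih =>
      rcases Nat.eq_zero_or_pos k with rfl | hk
      · rw [hy0]; ring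
      · have h := hclean k
        rw [Finset.sum_range_succ] at h
        have hlast : x k * f k * a ^ (k - k) / (Nat.factorial (k - k)) = x k * f k := by
          simp
        rw [hlast] at h
        have hrest : ∑ j ∈ Finset.range k, x j * f j * a ^ (k - j) / (Nat.factorial (k - j))
            = x 0 * ((f 0 - f k) * y k) := by
          rw [hid k hk, Finset.mul_sum]
          refine Finset.sum_congr rfl fun j hj => ?_
          rw [ih j (Finset.mem_range.1 hj)]
          ring
        rw [hrest] at h
        have hpos := (hfk k hk).ne'
        have : (f 0 - f k) * x k = (f 0 - f k) * (x 0 * y k) := by ring_nf; ring_nf at h; linarith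
        exact mul_left_cancel₀ hpos this
  -- hence y is summable, contradiction
  have hsx : Summable x := by
    by_contra hns'
    rw [tsum_eq_zero_of_not_summable hns'] at hxsum1
    norm_num at hxsum1
  have : Summable y := by
    have h1 : Summable (fun k => (x 0)⁻¹ * x k) := hsx.mul_left _
    have h2 : (fun k => (x 0)⁻¹ * x k) = y := by
      funext k
      rw [hxy k]
      field_simp
    rwa [h2] at h1
  exact hns this
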